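/- Let 𝒜 be a Hilbert space, R : 𝒜 → ℝ ∪ {∞} proper convex lower semicontinuous, σ > 0, q, q̂ ∈ 𝒜, and α, α̂ ∈ 𝒜 with α̂ = prox_{σR}(α̂ − σq̂). Suppose R is prox-σ-contractive at α̂ for q̂ within a set A ∋ α with constant C_R, i.e., ‖D(α) − D(α̂)‖ ≤ σC_R‖α − α̂‖ where D(β) := prox_{σR}(β − σq̂) − β. Then for α⁺ := prox_{σR}(α − σq): ‖α⁺ − α‖ ≤ σ‖q − q̂‖ + σC_R‖α − α̂‖. -/

import Mathlib

private lemma prox_small_t (s K : ℝ) (hK : 0 ≤ K)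
    (h : ∀ t : ℝ, 0 < t → t ≤ 1 → s ≤ t * K) : s ≤ 0 := by
  by_contra hs
  push_neg at hs
  rcases eq_or_lt_of_le hK with hK0 | hK0
  · have := h 1 one_pos le_rfl; nlinarith
  · have ht : (0:ℝ) < min 1 (s / (2 * K)) := lt_min one_pos (by positivity)
    have h2 := h _ ht (min_le_left _ _)
    have h3 : min 1 (s / (2 * K)) * K ≤ (s / (2 * K)) * K :=
      mul_le_mul_of_nonneg_right (min_le_right _ _) hK
    have h4 : (s / (2 * K)) * K = s / 2 := by field_simp
    nlinarith

/-- Step bound for the proximal update under prox-σ-contractivity. -/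
theorem prox_step_bound {𝒜 : Type*}
    [NormedAddCommGroup 𝒜] [InnerProductSpace ℝ 𝒜] [CompleteSpace 𝒜]
    (R : 𝒜 → EReal) (σ C_R : ℝ) (hσ : 0 < σ) (hCR : 0 ≤ C_R)
    (hproper_top : ∃ z, R z ≠ ⊤) (hproper_bot : ∀ z, R z ≠ ⊥)
    (hconv : ∀ x y : 𝒜, ∀ t : ℝ, 0 ≤ t → t ≤ 1 →
        R (t • x + (1 - t) • y) ≤ (t : EReal) * R x + ((1 - t : ℝ) : EReal) * R y)
    (hlsc : LowerSemicontinuous R)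
    (prox : 𝒜 → 𝒜)
    (hprox : ∀ x z : 𝒜,
        ((1 / 2 * ‖prox x - x‖ ^ 2 : ℝ) : EReal) + (σ : EReal) * R (prox x)
          ≤ ((1 / 2 * ‖z - x‖ ^ 2 : ℝ) : EReal) + (σ : EReal) * R z)
    (q qs α αs : 𝒜) (A : Set 𝒜) (hαA : α ∈ A)
    (hfix : αs = prox (αs - σ • qs))
    (hcontr : ∀ β ∈ A,
        ‖(prox (β - σ • qs) - β) - (prox (αs - σ • qs) - αs)‖ ≤ σ * C_R * ‖β - αs‖) :
    ‖prox (α - σ • q) - α‖ ≤ σ * ‖q - qs‖ + σ * C_R * ‖α - αs‖ := by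
  obtain ⟨z₀, hz₀⟩ := hproper_top
  have hz₀' : R z₀ = ((R z₀).toReal : EReal) := (EReal.coe_toReal hz₀ (hproper_bot z₀)).symm
  -- R is finite at every prox point
  have hfin : ∀ x : 𝒜, R (prox x) ≠ ⊤ := by
    intro x hx
    have H := hprox x z₀
    rw [hx, EReal.mul_top_of_pos (by exact_mod_cast hσ),
      EReal.add_top_of_ne_bot (EReal.coe_ne_bot _), hz₀'] at H
    have : ((1 / 2 * ‖z₀ - x‖ ^ 2 : ℝ) : EReal) + (σ : EReal) * ((R z₀).toReal : EReal)
        = (((1 / 2 * ‖z₀ - x‖ ^ 2 + σ * (R z₀).toReal : ℝ)) : EReal) := by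
      push_cast; ring
    rw [this, top_le_iff] at H
    exact EReal.coe_ne_top _ H
  have hrep : ∀ x : 𝒜, R (prox x) = (((R (prox x)).toReal : ℝ) : EReal) :=
    fun x => (EReal.coe_toReal (hfin x) (hproper_bot (prox x))).symm
  -- the key real-valued optimality inequality
  have key : ∀ x z : 𝒜, ∀ c : ℝ, R z = (c : EReal) →
      1 / 2 * ‖prox x - x‖ ^ 2 + σ * (R (prox x)).toReal
        ≤ 1 / 2 * ‖z - x‖ ^ 2 + σ * c := by
    intro x z c hc
    have H := hprox x z
    rw [hc, hrep x] at H
    exact_mod_cast H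
  -- the monotonicity-type inequality
  have step : ∀ x y : 𝒜,
      (inner ℝ (prox x - prox y) (prox x - x) : ℝ)
        ≤ σ * ((R (prox y)).toReal - (R (prox x)).toReal) := by
    intro x y
    set p := prox x with hp
    set p' := prox y with hp'
    set a := (R p).toReal
    set b := (R p').toReal
    have hs : (inner ℝ (p - p') (p - x) : ℝ) - σ * (b - a) ≤ 0 := by
      apply prox_small_t _ (1 / 2 * ‖p' - p‖ ^ 2) (by positivity)
      intro t ht ht1
      set z := t • p' + (1 - t) • p with hz
      have hRz : R z ≤ ((t * b + (1 - t) * a : ℝ) : EReal) := by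
        have := hconv p' p t ht.le ht1
        rw [hrep x, hrep y] at this
        calc R z ≤ (t : EReal) * ((b : ℝ) : EReal) + ((1 - t : ℝ) : EReal) * ((a : ℝ) : EReal) := this
          _ = ((t * b + (1 - t) * a : ℝ) : EReal) := by push_cast; ring
      have hzt : R z ≠ ⊤ := by
        intro h
        rw [h, top_le_iff] at hRz
        exact EReal.coe_ne_top _ hRz
      have hzrep : R z = (((R z).toReal : ℝ) : EReal) :=
        (EReal.coe_toReal hzt (hproper_bot z)).symm
      set c := (R z).toReal
      have hcle : c ≤ t * b + (1 - t) * a := by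
        rw [hzrep] at hRz; exact_mod_cast hRz
      have hk := key x z c hzrep
      have hzx : z - x = t • (p' - p) + (p - x) := by
        rw [hz]; module
      have hnorm : ‖z - x‖ ^ 2
          = t ^ 2 * ‖p' - p‖ ^ 2 + 2 * (t * (inner ℝ (p' - p) (p - x) : ℝ)) + ‖p - x‖ ^ 2 := by
        rw [hzx, norm_add_sq_real, real_inner_smul_left, norm_smul,
          Real.norm_eq_abs, abs_of_pos ht, mul_pow]
      have h1 : t * ((inner ℝ (p - p') (p - x) : ℝ) - σ * (b - a))
          ≤ t * (t * (1 / 2 * ‖p' - p‖ ^ 2)) := by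
        have hinner : (inner ℝ (p - p') (p - x) : ℝ) = -(inner ℝ (p' - p) (p - x) : ℝ) := by
          rw [← inner_neg_left]; simp
        rw [hnorm] at hk
        nlinarith [hk, mul_le_mul_of_nonneg_left hcle hσ.le, hinner, ht.le]
      exact (mul_le_mul_iff_right₀ ht).mp h1
    linarith [hs]
  -- nonexpansiveness of prox
  have nonexp : ∀ x y : 𝒜, ‖prox x - prox y‖ ≤ ‖x - y‖ := by
    intro x y
    have s1 := step x y
    have s2 := step y x
    have hflip : (inner ℝ (prox y - prox x) (prox y - y) : ℝ) = (inner ℝ (prox x - prox y) (y - prox y) : ℝ) := by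
      rw [← inner_neg_neg]; simp
    rw [hflip] at s2
    have hsum : (inner ℝ (prox x - prox y) ((prox x - x) + (y - prox y)) : ℝ) ≤ 0 := by
      rw [inner_add_right]; linarith
    have hrw : (prox x - x) + (y - prox y) = (prox x - prox y) - (x - y) := by module
    rw [hrw, inner_sub_right, real_inner_self_eq_norm_sq] at hsum
    have hle : ‖prox x - prox y‖ ^ 2 ≤ (inner ℝ (prox x - prox y) (x - y) : ℝ) := by linarith
    have hcs := real_inner_le_norm (prox x - prox y) (x - y)
    nlinarith [norm_nonneg (prox x - prox y), norm_nonneg (x - y)]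
  -- assemble
  have h1 : ‖prox (α - σ • q) - prox (α - σ • qs)‖ ≤ σ * ‖q - qs‖ := by
    have := nonexp (α - σ • q) (α - σ • qs)
    have heq : (α - σ • q) - (α - σ • qs) = σ • (qs - q) := by module
    rw [heq, norm_smul, Real.norm_eq_abs, abs_of_pos hσ, norm_sub_rev qs q] at this
    exact this
  have h2 : ‖prox (α - σ • qs) - α‖ ≤ σ * C_R * ‖α - αs‖ := by
    have := hcontr α hαA
    rw [← hfix] at this
    simpa using this
  calc ‖prox (α - σ • q) - α‖
      ≤ ‖prox (α - σ • q) - prox (α - σ • qs)‖ + ‖prox (α - σ • qs) - α‖ :=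
        norm_sub_le_norm_sub_add_norm_sub _ _ _
    _ ≤ σ * ‖q - qs‖ + σ * C_R * ‖α - αs‖ := add_le_add h1 h2
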